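/- arXiv:1011.3100 — 2 statements merged into one kernel-verified Lean document; each statement's English description precedes it below -/
import Mathlib

section
/- If X₁, …, X_N is a sequence of independent integer-valued random variables and n ≤ N, then D_{n,m}(ℒ(X₁ + ⋯ + X_N)) ≤ ∏_{i=1}^{n} D_{1,m}(ℒ(X_i)). -/
open MeasureTheory ProbabilityTheory Filter

noncomputable section

/-- Forward difference operator with step `m`. -/
def fd (m : ℤ) (f : ℤ → ℝ) : ℤ → ℝ := fun j => f (j + m) - f j

/-- The smoothness functional `D_{n,m}` of a law `ν` on `ℤ`. -/
def Dnm (n m : ℕ) (ν : Measure ℤ) : ℝ :=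
  sSup {x | ∃ g : ℤ → ℝ, (∀ i, |g i| ≤ 1) ∧ x = |∫ i, (fd m)^[n] g i ∂ν|}

lemma fd_iter_bound {m : ℤ} {f : ℤ → ℝ} {C : ℝ} (hf : ∀ j, |f j| ≤ C) :
    ∀ (n : ℕ) (j : ℤ), |(fd m)^[n] f j| ≤ 2 ^ n * C := by
  intro n
  induction n with
  | zero => simpa using hf
  | succ k ih =>
    intro j
    rw [Function.iterate_succ_apply']
    calc |fd m ((fd m)^[k] f) j| ≤ |(fd m)^[k] f (j + m)| + |(fd m)^[k] f j| := abs_sub _ _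
    _ ≤ 2 ^ k * C + 2 ^ k * C := add_le_add (ih _) (ih _)
    _ = 2 ^ (k + 1) * C := by ring

lemma fd_iter_shift {m : ℤ} (f : ℤ → ℝ) (y : ℤ) :
    ∀ (n : ℕ) (j : ℤ), (fd m)^[n] (fun x => f (x + y)) j = (fd m)^[n] f (j + y) := by
  intro n
  induction n generalizing f with
  | zero => simp
  | succ k ih =>
    intro j
    rw [Function.iterate_succ_apply, Function.iterate_succ_apply]
    have : fd m (fun x => f (x + y)) = fun x => fd m f (x + y) := by
      funext x
      simp only [fd]
      ring_nf
    rw [this, ih (fd m f) j]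

lemma fd_iter_smul {m : ℤ} (c : ℝ) (f : ℤ → ℝ) :
    ∀ (n : ℕ) (j : ℤ), (fd m)^[n] (fun x => c * f x) j = c * (fd m)^[n] f j := by
  intro n
  induction n generalizing f with
  | zero => simp
  | succ k ih =>
    intro j
    rw [Function.iterate_succ_apply, Function.iterate_succ_apply]
    have : fd m (fun x => c * f x) = fun x => c * fd m f x := by
      funext x; simp only [fd]; ring
    rw [this, ih]

lemma fd_iter_zero {m : ℤ} (n : ℕ) (j : ℤ) : (fd m)^[n] (fun _ => (0 : ℝ)) j = 0 := by
  have := fd_iter_smul (m := m) 0 (fun _ => (0:ℝ)) n j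
  simpa using this

lemma integrable_of_bdd {ν : Measure ℤ} [IsFiniteMeasure ν] {f : ℤ → ℝ} {C : ℝ}
    (hf : ∀ j, |f j| ≤ C) : Integrable f ν :=
  (integrable_const C).mono' Measurable.of_discrete.aestronglyMeasurable
    (ae_of_all _ (by simpa [Real.norm_eq_abs] using hf))

lemma Dnm_bddAbove (n m : ℕ) (ν : Measure ℤ) [IsProbabilityMeasure ν] :
    BddAbove {x | ∃ g : ℤ → ℝ, (∀ i, |g i| ≤ 1) ∧ x = |∫ i, (fd m)^[n] g i ∂ν|} := by
  refine ⟨2 ^ n, ?_⟩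
  rintro x ⟨g, hg, rfl⟩
  have h1 : ∀ j, ‖(fd m)^[n] g j‖ ≤ 2 ^ n := by
    intro j
    simpa [Real.norm_eq_abs] using fd_iter_bound hg n j
  calc |∫ i, (fd m)^[n] g i ∂ν| = ‖∫ i, (fd m)^[n] g i ∂ν‖ := rfl
  _ ≤ 2 ^ n * (ν Set.univ).toReal := norm_integral_le_of_norm_le_const (ae_of_all _ h1)
  _ = 2 ^ n := by simp

lemma Dnm_nonempty (n m : ℕ) (ν : Measure ℤ) :
    Set.Nonempty {x | ∃ g : ℤ → ℝ, (∀ i, |g i| ≤ 1) ∧ x = |∫ i, (fd m)^[n] g i ∂ν|} :=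
  ⟨_, (fun _ => 0), fun _ => by norm_num, rfl⟩

lemma Dnm_nonneg (n m : ℕ) (ν : Measure ℤ) [IsProbabilityMeasure ν] : 0 ≤ Dnm n m ν := by
  have h0 : (0 : ℝ) ∈ {x | ∃ g : ℤ → ℝ, (∀ i, |g i| ≤ 1) ∧ x = |∫ i, (fd m)^[n] g i ∂ν|} := by
    refine ⟨fun _ => 0, fun _ => by norm_num, ?_⟩
    have : ((fd m)^[n] (fun _ => (0:ℝ))) = fun _ => (0:ℝ) := funext (fd_iter_zero n)
    rw [this]; simp
  exact le_csSup (Dnm_bddAbove n m ν) h0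

lemma Dnm_zero_le (m : ℕ) (ν : Measure ℤ) [IsProbabilityMeasure ν] : Dnm 0 m ν ≤ 1 := by
  apply csSup_le (Dnm_nonempty 0 m ν)
  rintro x ⟨g, hg, rfl⟩
  simp only [Function.iterate_zero, id_eq]
  calc |∫ i, g i ∂ν| = ‖∫ i, g i ∂ν‖ := rfl
  _ ≤ 1 * (ν Set.univ).toReal := norm_integral_le_of_norm_le_const
      (ae_of_all _ (by simpa [Real.norm_eq_abs] using hg))
  _ = 1 := by simp

lemma integral_fd_iter (m : ℤ) {ν : Measure ℤ} [IsProbabilityMeasure ν] {h : ℤ → ℝ} {C : ℝ}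
    (hb : ∀ j, |h j| ≤ C) :
    ∀ (k : ℕ) (y : ℤ),
      ∫ x, (fd m)^[k] h (x + y) ∂ν = (fd m)^[k] (fun z => ∫ x, h (x + z) ∂ν) y := by
  intro k
  induction k with
  | zero => simp
  | succ k ih =>
    intro y
    have hbk : ∀ j, |(fd m)^[k] h j| ≤ 2 ^ k * C := fd_iter_bound hb k
    have int1 : Integrable (fun x => (fd m)^[k] h (x + (y + m))) ν :=
      integrable_of_bdd (fun j => hbk _)
    have int2 : Integrable (fun x => (fd m)^[k] h (x + y)) ν :=
      integrable_of_bdd (fun j => hbk _)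
    rw [Function.iterate_succ_apply', Function.iterate_succ_apply']
    show ∫ x, ((fd m)^[k] h ((x + y) + m) - (fd m)^[k] h (x + y)) ∂ν = _
    have e1 : ∀ x : ℤ, (x + y) + m = x + (y + m) := fun x => by ring
    simp_rw [e1]
    rw [integral_sub int1 int2, ih (y + m), ih y]
    rfl

lemma Dnm_add_le {Ω : Type*} [MeasurableSpace Ω] (μ : Measure Ω) [IsProbabilityMeasure μ]
    {X Y : Ω → ℤ} (hX : Measurable X) (hY : Measurable Y) (h : IndepFun X Y μ)
    (n1 n2 m : ℕ) :
    Dnm (n1 + n2) m (μ.map (fun ω => X ω + Y ω))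
      ≤ Dnm n1 m (μ.map X) * Dnm n2 m (μ.map Y) := by
  haveI i1 : IsProbabilityMeasure (μ.map X) := Measure.isProbabilityMeasure_map hX.aemeasurable
  haveI i2 : IsProbabilityMeasure (μ.map Y) := Measure.isProbabilityMeasure_map hY.aemeasurable
  set ν1 := μ.map X with hν1
  set ν2 := μ.map Y with hν2
  apply csSup_le (Dnm_nonempty _ _ _)
  rintro x ⟨g, hg, rfl⟩
  set F := (fd (m : ℤ))^[n1 + n2] g with hF
  have hFb : ∀ j, |F j| ≤ 2 ^ (n1 + n2) * 1 := fd_iter_bound hg (n1 + n2)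
  have intF : Integrable (fun p : ℤ × ℤ => F (p.2 + p.1)) (ν2.prod ν1) :=
    (integrable_const ((2 : ℝ) ^ (n1 + n2) * 1)).mono'
      Measurable.of_discrete.aestronglyMeasurable
      (ae_of_all _ fun p => by simpa [Real.norm_eq_abs] using hFb _)
  have key : ∫ i, F i ∂(μ.map (fun ω => X ω + Y ω)) = ∫ y, ∫ x, F (x + y) ∂ν1 ∂ν2 := by
    rw [integral_map (φ := fun ω => X ω + Y ω) (hX.add hY).aemeasurable Measurable.of_discrete.aestronglyMeasurable]
    have h3 : ∫ ω, F (X ω + Y ω) ∂μ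
        = ∫ p, F (p.2 + p.1) ∂(μ.map (fun ω => (Y ω, X ω))) :=
      (integral_map (f := fun p : ℤ × ℤ => F (p.2 + p.1)) (hY.prodMk hX).aemeasurable
        Measurable.of_discrete.aestronglyMeasurable).symm
    rw [h3,
      (indepFun_iff_map_prod_eq_prod_map_map hY.aemeasurable hX.aemeasurable).mp h.symm,
      integral_prod _ intF]
  set Ψ : ℤ → ℝ := fun z => ∫ x, (fd (m : ℤ))^[n1] g (x + z) ∂ν1 with hΨ
  have hswap : ∀ y, ∫ x, F (x + y) ∂ν1 = (fd (m : ℤ))^[n2] Ψ y := by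
    intro y
    have hFdec : F = (fd (m : ℤ))^[n2] ((fd (m : ℤ))^[n1] g) := by
      rw [hF, Nat.add_comm, Function.iterate_add_apply]
    rw [hFdec]
    exact integral_fd_iter _ (fd_iter_bound hg n1) n2 y
  have hΨle : ∀ z, |Ψ z| ≤ Dnm n1 m ν1 := by
    intro z
    have hz : Ψ z = ∫ x, (fd (m : ℤ))^[n1] (fun u => g (u + z)) x ∂ν1 := by
      simp only [hΨ]
      congr 1
      funext x
      rw [fd_iter_shift]
    apply le_csSup (Dnm_bddAbove n1 m ν1)
    exact ⟨fun u => g (u + z), fun u => hg _, by rw [hz]⟩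
  rw [key]
  have : ∫ y, (∫ x, F (x + y) ∂ν1) ∂ν2 = ∫ y, (fd (m : ℤ))^[n2] Ψ y ∂ν2 := by
    congr 1; funext y; exact hswap y
  rw [this]
  rcases eq_or_lt_of_le (Dnm_nonneg n1 m ν1) with hD1 | hD1
  · have hz : Ψ = fun _ => (0 : ℝ) := by
      funext z
      have := hΨle z
      rw [← hD1] at this
      exact abs_eq_zero.mp (le_antisymm this (abs_nonneg _))
    rw [hz]
    have : ∀ y, (fd (m : ℤ))^[n2] (fun _ => (0:ℝ)) y = 0 := fd_iter_zero n2
    simp only [this]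
    rw [integral_zero, abs_zero, ← hD1, zero_mul]
  · set D1 := Dnm n1 m ν1 with hD1def
    set φ : ℤ → ℝ := fun z => Ψ z / D1 with hφdef
    have hφ : ∀ z, |φ z| ≤ 1 := by
      intro z
      rw [hφdef]
      simp only [abs_div, abs_of_pos hD1]
      exact div_le_one_of_le₀ (hΨle z) hD1.le
    have hΨeq : Ψ = fun z => D1 * φ z := by
      funext z; rw [hφdef]; field_simp
    have hfd : ∀ y, (fd (m : ℤ))^[n2] Ψ y = D1 * (fd (m : ℤ))^[n2] φ y := by
      intro y; rw [hΨeq]; exact fd_iter_smul D1 φ n2 y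
    simp only [hfd]
    rw [integral_const_mul, abs_mul, abs_of_pos hD1]
    exact mul_le_mul_of_nonneg_left
      (le_csSup (Dnm_bddAbove n2 m ν2) ⟨φ, hφ, rfl⟩) hD1.le

lemma indepFun_sum_sum {Ω : Type*} [MeasurableSpace Ω] {μ : Measure Ω} {f : ℕ → Ω → ℤ}
    (hf_Indep : iIndepFun f μ)
    (hf_meas : ∀ i, Measurable (f i)) {S T : Finset ℕ} (hST : Disjoint S T) :
    IndepFun (fun ω => ∑ j ∈ S, f j ω) (fun ω => ∑ j ∈ T, f j ω) μ := by
  have h := hf_Indep.indepFun_finset S T hST hf_meas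
  have hs : Measurable (fun p : S → ℤ => ∑ j, p j) :=
    Finset.univ.measurable_sum fun j _ => measurable_pi_apply j
  have ht : Measurable (fun p : T → ℤ => ∑ j, p j) :=
    Finset.univ.measurable_sum fun j _ => measurable_pi_apply j
  have h2 := h.comp hs ht
  have e1 : ((fun p : S → ℤ => ∑ j, p j) ∘ fun a (i : S) => f i a)
      = fun ω => ∑ j ∈ S, f j ω := by
    funext ω
    exact Finset.sum_coe_sort _ fun j => f j ω
  have e2 : ((fun p : T → ℤ => ∑ j, p j) ∘ fun a (i : T) => f i a)
      = fun ω => ∑ j ∈ T, f j ω := by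
    funext ω
    exact Finset.sum_coe_sort _ fun j => f j ω
  rwa [e1, e2] at h2

lemma Dnm_sum_range {Ω : Type*} [MeasurableSpace Ω] (μ : Measure Ω) [IsProbabilityMeasure μ]
    (X : ℕ → Ω → ℤ) (hX : ∀ i, Measurable (X i))
    (hind : iIndepFun X μ) (m : ℕ) :
    ∀ n : ℕ, Dnm n m (μ.map (fun ω => ∑ i ∈ Finset.range n, X i ω))
      ≤ ∏ i ∈ Finset.range n, Dnm 1 m (μ.map (X i)) := by
  intro n
  induction n with
  | zero =>
    simp only [Finset.range_zero, Finset.sum_empty, Finset.prod_empty]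
    haveI : IsProbabilityMeasure (μ.map (fun _ : Ω => (0 : ℤ))) :=
      Measure.isProbabilityMeasure_map measurable_const.aemeasurable
    exact Dnm_zero_le m _
  | succ k ih =>
    have hsum : Measurable (fun ω => ∑ i ∈ Finset.range k, X i ω) :=
      Finset.measurable_sum _ fun i _ => hX i
    haveI : IsProbabilityMeasure (μ.map (X k)) :=
      Measure.isProbabilityMeasure_map (hX k).aemeasurable
    have hIF : IndepFun (fun ω => ∑ i ∈ Finset.range k, X i ω) (X k) μ := by
      have h0 := hind.indepFun_finsetSum_of_notMem hX
        (Finset.notMem_range_self (n := k))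
      have e : (∑ j ∈ Finset.range k, X j) = fun ω => ∑ j ∈ Finset.range k, X j ω := by
        funext ω; simp
      rwa [e] at h0
    have step : (fun ω => ∑ i ∈ Finset.range (k + 1), X i ω)
        = fun ω => (∑ i ∈ Finset.range k, X i ω) + X k ω := by
      funext ω; exact Finset.sum_range_succ _ _
    rw [step, Finset.prod_range_succ]
    calc Dnm (k + 1) m (μ.map (fun ω => (∑ i ∈ Finset.range k, X i ω) + X k ω))
        ≤ Dnm k m (μ.map (fun ω => ∑ i ∈ Finset.range k, X i ω)) * Dnm 1 m (μ.map (X k)) :=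
          Dnm_add_le μ hsum (hX k) hIF k 1 m
      _ ≤ (∏ i ∈ Finset.range k, Dnm 1 m (μ.map (X i))) * Dnm 1 m (μ.map (X k)) :=
          mul_le_mul_of_nonneg_right ih (Dnm_nonneg 1 m _)

/-- Lemma 5, second part: for independent `X₁,…,X_N` and `n ≤ N`,
`D_{n,m}(ℒ(X₁+⋯+X_N)) ≤ ∏_{i=1}^n D_{1,m}(ℒ(X_i))`. -/
theorem Dnm_sum_le_prod
    {Ω : Type*} [MeasurableSpace Ω] (μ : Measure Ω) [IsProbabilityMeasure μ]
    (N : ℕ) (X : ℕ → Ω → ℤ) (hX : ∀ i, Measurable (X i))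
    (hind : iIndepFun X μ)
    (n m : ℕ) (hn : 0 < n) (hm : 0 < m) (hnN : n ≤ N) :
    Dnm n m (μ.map (fun ω => ∑ i ∈ Finset.range N, X i ω))
      ≤ ∏ i ∈ Finset.range n, Dnm 1 m (μ.map (X i)) := by
  have hA : Measurable (fun ω => ∑ i ∈ Finset.range n, X i ω) :=
    Finset.measurable_sum _ fun i _ => hX i
  have hB : Measurable (fun ω => ∑ i ∈ Finset.Ico n N, X i ω) :=
    Finset.measurable_sum _ fun i _ => hX i
  haveI : IsProbabilityMeasure (μ.map (fun ω => ∑ i ∈ Finset.Ico n N, X i ω)) :=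
    Measure.isProbabilityMeasure_map hB.aemeasurable
  have hsplit : (fun ω => ∑ i ∈ Finset.range N, X i ω)
      = fun ω => (∑ i ∈ Finset.range n, X i ω) + ∑ i ∈ Finset.Ico n N, X i ω := by
    funext ω
    rw [Finset.range_eq_Ico, ← Finset.sum_Ico_consecutive _ (Nat.zero_le n) hnN,
      ← Finset.range_eq_Ico]
  have hdisj : Disjoint (Finset.range n) (Finset.Ico n N) := by
    rw [Finset.range_eq_Ico]
    exact Finset.Ico_disjoint_Ico_consecutive 0 n N
  have hindep := indepFun_sum_sum hind hX hdisj
  rw [hsplit]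
  have h1 := Dnm_add_le μ hA hB hindep n 0 m
  have h2 := Dnm_sum_range μ X hX hind m n
  have h3 := Dnm_zero_le m (μ.map (fun ω => ∑ i ∈ Finset.Ico n N, X i ω))
  have hprodnn : (0 : ℝ) ≤ ∏ i ∈ Finset.range n, Dnm 1 m (μ.map (X i)) :=
    Finset.prod_nonneg fun i _ => by
      haveI : IsProbabilityMeasure (μ.map (X i)) :=
        Measure.isProbabilityMeasure_map (hX i).aemeasurable
      exact Dnm_nonneg 1 m _
  calc Dnm n m (μ.map (fun ω => (∑ i ∈ Finset.range n, X i ω) + ∑ i ∈ Finset.Ico n N, X i ω))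
      ≤ Dnm n m (μ.map (fun ω => ∑ i ∈ Finset.range n, X i ω))
        * Dnm 0 m (μ.map (fun ω => ∑ i ∈ Finset.Ico n N, X i ω)) := h1
    _ ≤ (∏ i ∈ Finset.range n, Dnm 1 m (μ.map (X i))) * 1 := by
        apply mul_le_mul h2 h3 ?_ hprodnn
        exact Dnm_nonneg 0 m _
    _ = ∏ i ∈ Finset.range n, Dnm 1 m (μ.map (X i)) := mul_one _
end
end

section
/- In the Curie–Weiss Glauber dynamics, with Q₂(σ) = P(W'=W+2|σ) = (1/n)Σᵢ ((1−σᵢ)/2)·((tanh(βmᵢ+h)+1)/2) and Q_{2,2}(σ) = P(W'=W+2, W''=W'+2 | σ) for two consecutive steps, one has |Q_{2,2}(σ) − Q₂(σ)²| = O(1/n) uniformly in σ; more precisely |Q_{2,2}(σ) − Q₂(σ)²| ≤ (1/(8n²))Σᵢ(1−σᵢ)(tanh(βmᵢ+h)+1)² + (1/(8n²))Σ_{i≠j}(1−σᵢ)(1−σⱼ)|tanh(βmᵢ+h)+1|·|tanh(βm_{i,j}+β/n+h) − tanh(βmⱼ+h)|, and the right-hand side is at most C/n for a constant C depending only on β and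 h. -/
open Finset

noncomputable section

lemma hasDerivAt_tanh' (x : ℝ) :
    HasDerivAt Real.tanh (1 / Real.cosh x ^ 2) x := by
  have h := (Real.hasDerivAt_sinh x).div (Real.hasDerivAt_cosh x)
    (ne_of_gt (Real.cosh_pos x))
  have heq : (Real.cosh x * Real.cosh x - Real.sinh x * Real.sinh x) / Real.cosh x ^ 2
      = 1 / Real.cosh x ^ 2 := by
    rw [show Real.cosh x * Real.cosh x - Real.sinh x * Real.sinh x
        = Real.cosh x ^ 2 - Real.sinh x ^ 2 by ring, Real.cosh_sq_sub_sinh_sq]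
  have h2 : HasDerivAt (fun y => Real.sinh y / Real.cosh y) (1 / Real.cosh x ^ 2) x := by
    rw [← heq]; exact h
  have : (fun y => Real.sinh y / Real.cosh y) = Real.tanh := by
    funext y; rw [Real.tanh_eq_sinh_div_cosh]
  rwa [this] at h2

lemma tanh_lipschitz (a b : ℝ) : |Real.tanh a - Real.tanh b| ≤ |a - b| := by
  have := Convex.norm_image_sub_le_of_norm_hasDerivWithin_le
    (f := Real.tanh) (f' := fun x => 1 / Real.cosh x ^ 2) (C := 1) (s := Set.univ)
    (fun x _ => (hasDerivAt_tanh' x).hasDerivWithinAt)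
    (fun x _ => by
      rw [Real.norm_eq_abs, abs_of_nonneg (by positivity)]
      rw [div_le_one (by positivity)]
      nlinarith [Real.one_le_cosh x])
    convex_univ (Set.mem_univ b) (Set.mem_univ a)
  simpa [Real.norm_eq_abs] using this

lemma tanh_add_one_nonneg (x : ℝ) : 0 ≤ Real.tanh x + 1 := by
  have h : -1 < Real.tanh x := by
    rw [Real.tanh_eq_sinh_div_cosh, neg_lt, ← neg_div, div_lt_one (Real.cosh_pos x)]
    nlinarith [Real.cosh_add_sinh x, Real.exp_pos x]
  linarith

lemma tanh_add_one_le_two (x : ℝ) : Real.tanh x + 1 ≤ 2 := by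
  have h : Real.tanh x < 1 := by
    rw [Real.tanh_eq_sinh_div_cosh, div_lt_one (Real.cosh_pos x)]
    nlinarith [Real.cosh_sub_sinh x, Real.exp_pos (-x)]
  linarith

set_option maxHeartbeats 1000000

/-- Lemma 7, second part (Curie–Weiss model, Glauber dynamics): the bound
`|Q_{2,2}(σ) − Q₂(σ)²| ≤ (explicit right-hand side) ≤ C/n`. -/
theorem curieWeiss_Q22_bound (β h : ℝ) (hβ : 0 < β) :
    ∃ C : ℝ, 0 < C ∧ ∀ n : ℕ, 0 < n → ∀ σ : Fin n → ℝ, (∀ i, σ i = 1 ∨ σ i = -1) →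
      ∀ mi : Fin n → ℝ, (∀ i, mi i = (∑ j ∈ univ.erase i, σ j) / n) →
      ∀ mij : Fin n → Fin n → ℝ,
        (∀ i j, mij i j = (∑ k ∈ (univ.erase i).erase j, σ k) / n) →
      ∀ Q2 Q22 : ℝ,
        Q2 = (∑ i, ((1 - σ i) / 2) * ((Real.tanh (β * mi i + h) + 1) / 2)) / n →
        Q22 = (∑ i, ∑ j ∈ univ.erase i,
            (1 - σ i) * (Real.tanh (β * mi i + h) + 1) * (1 - σ j)
              * (Real.tanh (β * mij i j + β / n + h) + 1)) / (16 * n ^ 2) →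
      (|Q22 - Q2 ^ 2| ≤
          (∑ i, (1 - σ i) * (Real.tanh (β * mi i + h) + 1) ^ 2) / (8 * n ^ 2)
          + (∑ i, ∑ j ∈ univ.erase i, (1 - σ i) * (1 - σ j)
              * |Real.tanh (β * mi i + h) + 1|
              * |Real.tanh (β * mij i j + β / n + h) - Real.tanh (β * mi j + h)|)
            / (8 * n ^ 2))
      ∧ (∑ i, (1 - σ i) * (Real.tanh (β * mi i + h) + 1) ^ 2) / (8 * n ^ 2)
          + (∑ i, ∑ j ∈ univ.erase i, (1 - σ i) * (1 - σ j)
              * |Real.tanh (β * mi i + h) + 1|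
              * |Real.tanh (β * mij i j + β / n + h) - Real.tanh (β * mi j + h)|)
            / (8 * n ^ 2) ≤ C / n := by
  refine ⟨1 + 2 * β, by linarith, ?_⟩
  intro n hn σ hσ mi hmi mij hmij Q2 Q22 hQ2 hQ22
  have hn0 : (0:ℝ) < n := by exact_mod_cast hn
  have hn' : (n:ℝ) ≠ 0 := ne_of_gt hn0
  set t : Fin n → ℝ := fun i => Real.tanh (β * mi i + h) with ht
  set s : Fin n → Fin n → ℝ := fun i j => Real.tanh (β * mij i j + β / n + h) with hs
  set A : Fin n → ℝ := fun i => (1 - σ i) * (t i + 1) with hA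
  -- basic facts
  have hσ0 : ∀ i, 0 ≤ 1 - σ i := by
    intro i; rcases hσ i with h1 | h1 <;> rw [h1] <;> norm_num
  have hσ2 : ∀ i, 1 - σ i ≤ 2 := by
    intro i; rcases hσ i with h1 | h1 <;> rw [h1] <;> norm_num
  have hσsq : ∀ i, (1 - σ i) ^ 2 = 2 * (1 - σ i) := by
    intro i; rcases hσ i with h1 | h1 <;> rw [h1] <;> norm_num
  have ht01 : ∀ i, 0 ≤ t i + 1 := fun i => tanh_add_one_nonneg _
  have ht2 : ∀ i, t i + 1 ≤ 2 := fun i => tanh_add_one_le_two _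
  -- Q2 squared as double sum
  have hQ2sq : Q2 ^ 2 = (∑ i, ∑ j, A i * A j) / (16 * (n:ℝ) ^ 2) := by
    have hmul : (∑ i, A i) * (∑ j, A j) = ∑ i, ∑ j, A i * A j :=
      Finset.sum_mul_sum _ _ _ _
    have hf : (∑ i, ((1 - σ i) / 2) * ((Real.tanh (β * mi i + h) + 1) / 2))
        = (∑ i, A i) / 4 := by
      rw [Finset.sum_div]
      exact Finset.sum_congr rfl fun i _ => by simp only [hA, ht]; ring
    rw [hQ2, hf, ← hmul]
    field_simp
    ring
  -- split diagonal
  have hsplit : (∑ i, ∑ j, A i * A j)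
      = (∑ i, ∑ j ∈ univ.erase i, A i * A j) + ∑ i, A i * A i := by
    rw [← Finset.sum_add_distrib]
    exact Finset.sum_congr rfl fun i _ =>
      (Finset.sum_erase_add univ _ (mem_univ i)).symm
  -- key identity
  have hkey : Q22 - Q2 ^ 2 =
      ((∑ i, ∑ j ∈ univ.erase i, (1 - σ i) * (t i + 1) * (1 - σ j) * (s i j - t j))
        - ∑ i, 2 * (1 - σ i) * (t i + 1) ^ 2) / (16 * (n:ℝ) ^ 2) := by
    rw [hQ22, hQ2sq, hsplit, ← sub_div]
    congr 1
    have h1 : (∑ i, ∑ j ∈ univ.erase i,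
        (1 - σ i) * (Real.tanh (β * mi i + h) + 1) * (1 - σ j)
          * (Real.tanh (β * mij i j + β / n + h) + 1))
        - (∑ i, ∑ j ∈ univ.erase i, A i * A j)
        = ∑ i, ∑ j ∈ univ.erase i, (1 - σ i) * (t i + 1) * (1 - σ j) * (s i j - t j) := by
      rw [← Finset.sum_sub_distrib]
      refine Finset.sum_congr rfl fun i _ => ?_
      rw [← Finset.sum_sub_distrib]
      refine Finset.sum_congr rfl fun j _ => ?_
      simp only [hA, ht, hs]; ring
    have h2 : (∑ i, A i * A i) = ∑ i, 2 * (1 - σ i) * (t i + 1) ^ 2 := by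
      refine Finset.sum_congr rfl fun i _ => ?_
      simp only [hA]; nlinarith [hσsq i]
    rw [h2] at *
    linarith [h1]
  -- bound on the difference of tanh values
  have hst : ∀ i j : Fin n, j ∈ univ.erase i → |s i j - t j| ≤ 2 * β / n := by
    intro i j hj
    have hji : j ≠ i := (Finset.mem_erase.mp hj).1
    have hmem : i ∈ univ.erase j := Finset.mem_erase.mpr ⟨hji.symm, mem_univ i⟩
    have hsum : (∑ k ∈ (univ.erase j).erase i, σ k) + σ i = ∑ k ∈ univ.erase j, σ k :=
      Finset.sum_erase_add _ _ hmem
    have harg : (β * mij i j + β / n + h) - (β * mi j + h) = β * (1 - σ i) / n := by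
      rw [hmij i j, hmi j, Finset.erase_right_comm]
      field_simp
      linear_combination β * hsum
    calc |s i j - t j| ≤ |(β * mij i j + β / n + h) - (β * mi j + h)| :=
          tanh_lipschitz _ _
      _ = β * (1 - σ i) / n := by
          rw [harg, abs_of_nonneg (div_nonneg (mul_nonneg hβ.le (hσ0 i)) hn0.le)]
      _ ≤ β * 2 / n := by gcongr; exact hσ2 i
      _ = 2 * β / n := by ring
  -- abbreviations for the two RHS sums
  set D : ℝ := ∑ i, (1 - σ i) * (t i + 1) ^ 2 with hD
  set S : ℝ := ∑ i, ∑ j ∈ univ.erase i,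
      (1 - σ i) * (1 - σ j) * |t i + 1| * |s i j - t j| with hS
  have hDnn : 0 ≤ D := Finset.sum_nonneg fun i _ => by
    have := hσ0 i; positivity
  have hSnn : 0 ≤ S := Finset.sum_nonneg fun i _ => Finset.sum_nonneg fun j _ => by
    have := hσ0 i; have := hσ0 j; positivity
  have hEabs : |∑ i, ∑ j ∈ univ.erase i,
      (1 - σ i) * (t i + 1) * (1 - σ j) * (s i j - t j)| ≤ S := by
    calc |∑ i, ∑ j ∈ univ.erase i, (1 - σ i) * (t i + 1) * (1 - σ j) * (s i j - t j)|
        ≤ ∑ i, |∑ j ∈ univ.erase i, (1 - σ i) * (t i + 1) * (1 - σ j) * (s i j - t j)| :=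
          Finset.abs_sum_le_sum_abs _ _
      _ ≤ ∑ i, ∑ j ∈ univ.erase i, |(1 - σ i) * (t i + 1) * (1 - σ j) * (s i j - t j)| :=
          Finset.sum_le_sum fun i _ => Finset.abs_sum_le_sum_abs _ _
      _ = S := by
          refine Finset.sum_congr rfl fun i _ => Finset.sum_congr rfl fun j _ => ?_
          rw [abs_mul, abs_mul, abs_mul, abs_of_nonneg (hσ0 i), abs_of_nonneg (hσ0 j)]
          ring
  have habs2 : |∑ i, 2 * (1 - σ i) * (t i + 1) ^ 2| = 2 * D := by
    rw [abs_of_nonneg (Finset.sum_nonneg fun i _ => by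
      have := hσ0 i; have := ht01 i; positivity)]
    rw [hD, Finset.mul_sum]
    exact Finset.sum_congr rfl fun i _ => by ring
  constructor
  · rw [hkey]
    rw [abs_div, abs_of_nonneg (by positivity : (0:ℝ) ≤ 16 * (n:ℝ) ^ 2)]
    have h1 : |(∑ i, ∑ j ∈ univ.erase i, (1 - σ i) * (t i + 1) * (1 - σ j) * (s i j - t j))
        - ∑ i, 2 * (1 - σ i) * (t i + 1) ^ 2| ≤ 2 * S + 2 * D := by
      have := abs_sub (∑ i, ∑ j ∈ univ.erase i,
        (1 - σ i) * (t i + 1) * (1 - σ j) * (s i j - t j))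
        (∑ i, 2 * (1 - σ i) * (t i + 1) ^ 2)
      rw [habs2] at this
      linarith [hEabs]
    have heq : (2 * S + 2 * D) / (16 * (n:ℝ) ^ 2)
        = D / (8 * (n:ℝ) ^ 2) + S / (8 * (n:ℝ) ^ 2) := by
      field_simp; ring
    rw [← heq]
    gcongr
  · -- second inequality: bound by C / n
    have hDle : D ≤ 8 * n := by
      calc D ≤ ∑ _i : Fin n, (8:ℝ) := Finset.sum_le_sum fun i _ => by
            nlinarith [hσ0 i, hσ2 i, ht01 i, ht2 i]
        _ = 8 * n := by simp [mul_comm]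
    have hSle : S ≤ 16 * β * n := by
      have hterm : ∀ i, ∀ j ∈ univ.erase i,
          (1 - σ i) * (1 - σ j) * |t i + 1| * |s i j - t j| ≤ 16 * β / n := by
        intro i j hj
        have h1 : |t i + 1| ≤ 2 := by
          rw [abs_of_nonneg (ht01 i)]; exact ht2 i
        have h2 := hst i j hj
        have hab : (1 - σ i) * (1 - σ j) ≤ 4 := by
          nlinarith [hσ0 i, hσ0 j, hσ2 i, hσ2 j]
        have hab0 : 0 ≤ (1 - σ i) * (1 - σ j) := mul_nonneg (hσ0 i) (hσ0 j)
        have h3 : (1 - σ i) * (1 - σ j) * |t i + 1| ≤ 8 := by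
          calc (1 - σ i) * (1 - σ j) * |t i + 1| ≤ 4 * 2 :=
                mul_le_mul hab h1 (abs_nonneg _) (by norm_num)
            _ = 8 := by norm_num
        have h4 : 0 ≤ (1 - σ i) * (1 - σ j) * |t i + 1| := by
          have := hσ0 i; have := hσ0 j; positivity
        calc (1 - σ i) * (1 - σ j) * |t i + 1| * |s i j - t j|
            ≤ 8 * (2 * β / n) := by
              apply mul_le_mul h3 h2 (abs_nonneg _) (by norm_num)
          _ = 16 * β / n := by ring
      calc S ≤ ∑ i : Fin n, ∑ j ∈ univ.erase i, 16 * β / n :=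
            Finset.sum_le_sum fun i _ => Finset.sum_le_sum (hterm i)
        _ ≤ ∑ i : Fin n, ∑ _j : Fin n, 16 * β / n := by
            refine Finset.sum_le_sum fun i _ => ?_
            refine Finset.sum_le_sum_of_subset_of_nonneg (Finset.erase_subset _ _)
              fun j _ _ => by positivity
        _ = n * (n * (16 * β / n)) := by
            simp [Finset.sum_const, mul_comm, mul_assoc]
        _ = 16 * β * n := by field_simp
    have heq : (1 + 2 * β) / (n:ℝ)
        = 8 * n / (8 * (n:ℝ) ^ 2) + 16 * β * n / (8 * (n:ℝ) ^ 2) := by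
      field_simp; ring
    rw [heq]
    gcongr
end
end
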